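/- arXiv:2506.19522 — 2 statements merged into one kernel-verified Lean document; each statement's English description precedes it below -/
import Mathlib

section
/- Let V: ℝⁿ → ℝ be continuously differentiable with V(0) = 0, V(x) > 0 for x ≠ 0, V radially unbounded, and suppose along solutions of ẋ = f(x) we have V̇(x) ≤ −k·V(x)^ρ for all x ≠ 0 with k > 0 and ρ ∈ (0,1). Then the origin is finite-time stable: every solution reaches x = 0 in time at most V(x(0))^(1−ρ)/(k(1−ρ)). -/
theorem finite_time_stability {n : ℕ} (f : (Fin n → ℝ) → (Fin n → ℝ))
    (hf : LocallyLipschitz f) (hf0 : f 0 = 0)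
    (V : (Fin n → ℝ) → ℝ) (hV : ContDiff ℝ 1 V) (hV0 : V 0 = 0)
    (hVpos : ∀ x, x ≠ 0 → 0 < V x)
    (hVrad : ∀ c : ℝ, ∃ R : ℝ, ∀ x, R ≤ ‖x‖ → c ≤ V x)
    (k ρ : ℝ) (hk : 0 < k) (hρ : ρ ∈ Set.Ioo (0:ℝ) 1)
    (hdec : ∀ x, x ≠ 0 → fderiv ℝ V x (f x) ≤ -k * Real.rpow (V x) ρ)
    (x : ℝ → (Fin n → ℝ)) (hx : ∀ t ≥ (0:ℝ), HasDerivAt x (f (x t)) t) :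
    ∃ T ∈ Set.Icc (0:ℝ)
        (Real.rpow (V (x 0)) (1 - ρ) / (k * (1 - ρ))), x T = 0 := by
  obtain ⟨hρ0, hρ1⟩ := hρ
  have h1ρ : 0 < 1 - ρ := by linarith
  set T₀ : ℝ := Real.rpow (V (x 0)) (1 - ρ) / (k * (1 - ρ)) with hT₀def
  by_cases h0 : x 0 = 0
  · refine ⟨0, ⟨le_refl 0, ?_⟩, h0⟩
    rw [hT₀def, h0, hV0]
    show (0:ℝ) ≤ (0:ℝ) ^ ((1:ℝ) - ρ) / (k * (1 - ρ))
    rw [Real.zero_rpow (by linarith : (1:ℝ) - ρ ≠ 0)]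
    simp
  · have hv0 : 0 < V (x 0) := hVpos _ h0
    have hkρ : 0 < k * (1 - ρ) := mul_pos hk h1ρ
    have hT₀pos : 0 < T₀ := div_pos (Real.rpow_pos_of_pos hv0 _) hkρ
    by_contra hcon
    push_neg at hcon
    -- on [0, T₀], x t ≠ 0 and V (x t) > 0
    have hne : ∀ t ∈ Set.Icc (0:ℝ) T₀, x t ≠ 0 := fun t ht => hcon t ht
    have hvpos : ∀ t ∈ Set.Icc (0:ℝ) T₀, 0 < V (x t) := fun t ht => hVpos _ (hne t ht)
    -- h(t) = V(x t)^(1-ρ) + k(1-ρ) t has nonpositive derivative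
    set g : ℝ → ℝ := fun t => Real.rpow (V (x t)) (1 - ρ) + k * (1 - ρ) * t with hgdef
    have hderiv : ∀ t ∈ Set.Icc (0:ℝ) T₀, HasDerivAt g
        (fderiv ℝ V (x t) (f (x t)) * (1 - ρ) * Real.rpow (V (x t)) ((1 - ρ) - 1)
          + k * (1 - ρ)) t := by
      intro t ht
      have hxt : HasDerivAt x (f (x t)) t := hx t ht.1
      have hVd : HasFDerivAt V (fderiv ℝ V (x t)) (x t) :=
        (hV.differentiable one_ne_zero (x t)).hasFDerivAt
      have hv : HasDerivAt (fun s => V (x s)) (fderiv ℝ V (x t) (f (x t))) t :=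
        hVd.comp_hasDerivAt t hxt
      have hr : HasDerivAt (fun s => Real.rpow (V (x s)) (1 - ρ))
          (fderiv ℝ V (x t) (f (x t)) * (1 - ρ) * Real.rpow (V (x t)) ((1 - ρ) - 1)) t := by
        have := hv.rpow_const (p := 1 - ρ) (Or.inl (ne_of_gt (hvpos t ht)))
        simpa [mul_comm, mul_assoc, mul_left_comm] using this
      have hsum := hr.add ((hasDerivAt_id t).const_mul (k * (1 - ρ)))
      rw [mul_one] at hsum
      exact hsum
    have hderiv_nonpos : ∀ t ∈ Set.Icc (0:ℝ) T₀,
        fderiv ℝ V (x t) (f (x t)) * (1 - ρ) * Real.rpow (V (x t)) ((1 - ρ) - 1)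
          + k * (1 - ρ) ≤ 0 := by
      intro t ht
      have hvt : 0 < V (x t) := hvpos t ht
      have hrp : 0 < Real.rpow (V (x t)) ((1 - ρ) - 1) := Real.rpow_pos_of_pos hvt _
      have hd := hdec (x t) (hne t ht)
      have hmul : fderiv ℝ V (x t) (f (x t)) * (1 - ρ) * Real.rpow (V (x t)) ((1 - ρ) - 1)
          ≤ -k * Real.rpow (V (x t)) ρ * (1 - ρ) * Real.rpow (V (x t)) ((1 - ρ) - 1) := by
        have h1 : fderiv ℝ V (x t) (f (x t)) * (1 - ρ) ≤ -k * Real.rpow (V (x t)) ρ * (1 - ρ) :=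
          mul_le_mul_of_nonneg_right hd (le_of_lt h1ρ)
        exact mul_le_mul_of_nonneg_right h1 (le_of_lt hrp)
      have hkey : -k * Real.rpow (V (x t)) ρ * (1 - ρ) * Real.rpow (V (x t)) ((1 - ρ) - 1)
          = -(k * (1 - ρ)) := by
        have : Real.rpow (V (x t)) ρ * Real.rpow (V (x t)) ((1 - ρ) - 1) = 1 := by
          show V (x t) ^ ρ * V (x t) ^ ((1 - ρ) - 1) = 1
          rw [← Real.rpow_add hvt]
          norm_num
        calc -k * Real.rpow (V (x t)) ρ * (1 - ρ) * Real.rpow (V (x t)) ((1 - ρ) - 1)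
            = -(k * (1 - ρ)) * (Real.rpow (V (x t)) ρ * Real.rpow (V (x t)) ((1 - ρ) - 1)) := by
              ring
          _ = -(k * (1 - ρ)) := by rw [this, mul_one]
      linarith [hmul.trans_eq hkey]
    -- g is antitone on [0, T₀]
    have hanti : AntitoneOn g (Set.Icc (0:ℝ) T₀) := by
      apply antitoneOn_of_deriv_nonpos (convex_Icc _ _)
      · exact fun t ht => (hderiv t ht).continuousAt.continuousWithinAt
      · intro t ht
        rw [interior_Icc] at ht
        exact (hderiv t (Set.Ioo_subset_Icc_self ht)).differentiableAt.differentiableWithinAt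
      · intro t ht
        rw [interior_Icc] at ht
        have ht' := Set.Ioo_subset_Icc_self ht
        rw [(hderiv t ht').deriv]
        exact hderiv_nonpos t ht'
    have hle : g T₀ ≤ g 0 :=
      hanti (Set.left_mem_Icc.mpr (le_of_lt hT₀pos))
        (Set.right_mem_Icc.mpr (le_of_lt hT₀pos)) (le_of_lt hT₀pos)
    have hg0 : g 0 = Real.rpow (V (x 0)) (1 - ρ) := by simp [hgdef]
    have hkT : k * (1 - ρ) * T₀ = Real.rpow (V (x 0)) (1 - ρ) := by
      rw [hT₀def]
      field_simp
    have hgT : 0 < Real.rpow (V (x T₀)) (1 - ρ) :=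
      Real.rpow_pos_of_pos (hvpos T₀ (Set.right_mem_Icc.mpr (le_of_lt hT₀pos))) _
    have : Real.rpow (V (x T₀)) (1 - ρ) + k * (1 - ρ) * T₀ ≤ Real.rpow (V (x 0)) (1 - ρ) := by
      simpa [hgdef, hg0] using hle
    linarith
end

section
/- Under the planar kinematics with saturation model ȧ_M = [1 − (a_M/a_max)ⁿ]b_y − ρ a_M, choosing the commanded input b_y = [ρ a_M + α̇_y − z₂/V_M − k_y z_y] / [1 − (a_M/a_max)ⁿ] (valid when |a_M| < a_max) yields V̇ = −k₂ z₂² − k_y z_y² for the composite Lyapunov function V = (1/2)z₂² + (1/2)z_y², implying V(t) ≤ V(0)e^(−2 min(k₂,k_y) t) and asymptotic convergence of z₂ and z_y to zero. -/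
theorem planar_composite_lyapunov (VM aMax ρ k2 ky : ℝ) (n : ℕ)
    (hVM : 0 < VM) (haMax : 0 < aMax) (hρ : 0 < ρ) (hk2 : 0 < k2) (hky : 0 < ky)
    (hn : 2 ≤ n) (hne : Even n)
    (r θ σ σd αy aM : ℝ → ℝ) (σd' αy' : ℝ → ℝ)
    (hr : ∀ t, 0 < r t)
    (hsat : ∀ t, |aM t| < aMax)
    (hrt : ∀ t, HasDerivAt r (-VM * Real.cos (σ t)) t)
    (hθt : ∀ t, HasDerivAt θ (-VM * Real.sin (σ t) / r t) t)
    (hσt : ∀ t, HasDerivAt σ (aM t / VM - (-VM * Real.sin (σ t) / r t)) t)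
    (hσd : ∀ t, HasDerivAt σd (σd' t) t)
    (hα : ∀ t, αy t = VM * (σd' t - VM * Real.sin (σ t) / r t - k2 * (σ t - σd t)))
    (hα' : ∀ t, HasDerivAt αy (αy' t) t)
    (by_ : ℝ → ℝ)
    (hby : ∀ t, by_ t = (ρ * aM t + αy' t - (σ t - σd t) / VM - ky * (aM t - αy t)) /
        (1 - (aM t / aMax) ^ n))
    (haM : ∀ t, HasDerivAt aM ((1 - (aM t / aMax) ^ n) * by_ t - ρ * aM t) t)
    (V : ℝ → ℝ)
    (hV : ∀ t, V t = (1/2) * (σ t - σd t) ^ 2 + (1/2) * (aM t - αy t) ^ 2) :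
    (∀ t, HasDerivAt V (-k2 * (σ t - σd t) ^ 2 - ky * (aM t - αy t) ^ 2) t) ∧
    (∀ t ≥ (0:ℝ), V t ≤ V 0 * Real.exp (-2 * min k2 ky * t)) ∧
    Filter.Tendsto (fun t => σ t - σd t) Filter.atTop (nhds 0) ∧
    Filter.Tendsto (fun t => aM t - αy t) Filter.atTop (nhds 0) := by
  have hVMne : VM ≠ 0 := hVM.ne'
  -- the saturation denominator is positive
  have hden : ∀ t, (0:ℝ) < 1 - (aM t / aMax) ^ n := by
    intro t
    have h1 : |aM t / aMax| < 1 := by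
      rw [abs_div, abs_of_pos haMax, div_lt_one haMax]; exact hsat t
    have h2 : |aM t / aMax| ^ n < 1 := pow_lt_one₀ (abs_nonneg _) h1 (by omega)
    have h3 : (aM t / aMax) ^ n ≤ |aM t / aMax| ^ n := by
      rw [← abs_pow]; exact le_abs_self _
    linarith
  -- derivative of V
  have hVd : ∀ t, HasDerivAt V (-k2 * (σ t - σd t) ^ 2 - ky * (aM t - αy t) ^ 2) t := by
    intro t
    have hVfun : V = fun t => (1/2) * (σ t - σd t) ^ 2 + (1/2) * (aM t - αy t) ^ 2 :=
      funext hV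
    rw [hVfun]
    have h1 := (hσt t).sub (hσd t)
    have h2 := (haM t).sub (hα' t)
    have hd := ((h1.pow 2).const_mul ((1:ℝ)/2)).add ((h2.pow 2).const_mul ((1:ℝ)/2))
    refine hd.congr_deriv (Eq.symm ?_)
    have eq1 : (1 - (aM t / aMax) ^ n) * by_ t =
        ρ * aM t + αy' t - (σ t - σd t) / VM - ky * (aM t - αy t) := by
      rw [hby t, mul_div_cancel₀ _ (hden t).ne']
    have eq2' : σd' t = αy t / VM + VM * Real.sin (σ t) / r t + k2 * (σ t - σd t) := by
      rw [hα t]; field_simp; ring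
    push_cast [Pi.sub_apply]
    linear_combination (-(aM t - αy t)) * eq1 + (σ t - σd t) * eq2'

  refine ⟨hVd, ?_⟩
  set m := min k2 ky with hm
  have hmpos : 0 < m := lt_min hk2 hky
  -- V nonneg
  have hVnn : ∀ t, 0 ≤ V t := by
    intro t; rw [hV t]; positivity
  -- V' ≤ -2 m V
  have hineq : ∀ t, -k2 * (σ t - σd t) ^ 2 - ky * (aM t - αy t) ^ 2 ≤ -2 * m * V t := by
    intro t
    rw [hV t]
    have h1 : m ≤ k2 := min_le_left _ _
    have h2 : m ≤ ky := min_le_right _ _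
    nlinarith [sq_nonneg (σ t - σd t), sq_nonneg (aM t - αy t)]
  -- auxiliary function g t = V t * exp (2 m t)
  set g : ℝ → ℝ := fun t => V t * Real.exp (2 * m * t) with hg
  have hgd : ∀ t, HasDerivAt g
      ((-k2 * (σ t - σd t) ^ 2 - ky * (aM t - αy t) ^ 2) * Real.exp (2 * m * t)
        + V t * (Real.exp (2 * m * t) * (2 * m))) t := by
    intro t
    have he : HasDerivAt (fun s => Real.exp (2 * m * s)) (Real.exp (2 * m * t) * (2 * m)) t := by
      simpa using (((hasDerivAt_id t).const_mul (2 * m)).exp)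
    exact (hVd t).mul he
  have hganti : Antitone g := by
    apply antitone_of_deriv_nonpos
    · exact fun t => (hgd t).differentiableAt
    · intro t
      rw [(hgd t).deriv]
      have := hineq t
      nlinarith [Real.exp_pos (2 * m * t), hVnn t]
  have hbound : ∀ t ≥ (0:ℝ), V t ≤ V 0 * Real.exp (-2 * m * t) := by
    intro t ht
    have h := hganti ht
    simp only [hg, mul_zero, Real.exp_zero, mul_one] at h
    have hrw : V t = (V t * Real.exp (2 * m * t)) * Real.exp (-2 * m * t) := by
      rw [mul_assoc, ← Real.exp_add, show 2 * m * t + -2 * m * t = 0 by ring,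
        Real.exp_zero, mul_one]
    rw [hrw]
    exact mul_le_mul_of_nonneg_right h (Real.exp_pos _).le
  refine ⟨hbound, ?_⟩
  -- exponential bound tends to 0
  have hexp0 : Filter.Tendsto (fun t => V 0 * Real.exp (-2 * m * t))
      Filter.atTop (nhds 0) := by
    have h1 : Filter.Tendsto (fun t : ℝ => -2 * m * t) Filter.atTop Filter.atBot := by
      apply Filter.Tendsto.const_mul_atTop_of_neg (by linarith : (-2:ℝ) * m < 0)
      exact Filter.tendsto_id
    have h2 := Real.tendsto_exp_atBot.comp h1
    have := h2.const_mul (V 0)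
    simpa using this
  have hVto0 : Filter.Tendsto V Filter.atTop (nhds 0) := by
    apply tendsto_of_tendsto_of_tendsto_of_le_of_le' tendsto_const_nhds hexp0
    · exact Filter.Eventually.of_forall hVnn
    · filter_upwards [Filter.eventually_ge_atTop (0:ℝ)] with t ht
      exact hbound t ht
  have hsq : ∀ (f : ℝ → ℝ), (∀ t, (1/2) * f t ^ 2 ≤ V t) →
      Filter.Tendsto f Filter.atTop (nhds 0) := by
    intro f hf
    have hf2 : Filter.Tendsto (fun t => f t ^ 2) Filter.atTop (nhds 0) := by
      apply tendsto_of_tendsto_of_tendsto_of_le_of_le' tendsto_const_nhds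
        (by simpa using hVto0.const_mul 2)
      · exact Filter.Eventually.of_forall fun t => sq_nonneg _
      · exact Filter.Eventually.of_forall fun t => by linarith [hf t]
    have habs : Filter.Tendsto (fun t => |f t|) Filter.atTop (nhds 0) := by
      have h := (Real.continuous_sqrt.tendsto 0).comp hf2
      rw [Real.sqrt_zero] at h
      refine h.congr fun t => ?_
      simp [Function.comp, Real.sqrt_sq_eq_abs]
    apply tendsto_of_tendsto_of_tendsto_of_le_of_le' (by simpa using habs.neg) habs
    · exact Filter.Eventually.of_forall fun t => neg_abs_le _
    · exact Filter.Eventually.of_forall fun t => le_abs_self _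
  constructor
  · apply hsq
    intro t; rw [hV t]; nlinarith [sq_nonneg (aM t - αy t)]
  · apply hsq
    intro t; rw [hV t]; nlinarith [sq_nonneg (σ t - σd t)]
end
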